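/- In the parallel composition of an NFA G with its observer Obs(G): (1) for every reachable observer state q and every x ∈ q, the pair (x, q) is a reachable state of the composition; and (2) a pair (x, q) is a reachable state of the composition if and only if there exists a string s ∈ L(G) leading from some initial state of G to x such that P(s) leads the observer from its initial state to q. -/

import Mathlib

namespace SBO

variable {X E : Type}

/-- Extended transition function of an NFA. -/
def ext (δ : X → E → Set X) : X → List E → Set X
  | x, [] => {x}
  | x, σ :: s => ⋃ y ∈ δ x σ, ext δ y s

/-- A run from `x` to `z` labeled by `s`. -/
def IsRun (δ : X → E → Set X) : X → List E → X → Prop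
  | x, [], z => x = z
  | x, σ :: s, z => ∃ y ∈ δ x σ, IsRun δ y s z

/-- A run all of whose states lie in `NS`. -/
def IsNSRun (δ : X → E → Set X) (NS : Set X) : X → List E → X → Prop
  | x, [], z => x = z ∧ x ∈ NS
  | x, σ :: s, z => x ∈ NS ∧ ∃ y ∈ δ x σ, IsNSRun δ NS y s z

/-- Natural projection onto observable events. -/
def proj (Eo : E → Bool) (s : List E) : List E := s.filter Eo

/-- Strong K-step opacity, Definition 3.1 (suffix of the matching run is non-secret). -/
def KSSO (δ : X → E → Set X) (Eo : E → Bool) (X0 XS : Set X) (K : ℕ) : Prop :=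
  ∀ x0 ∈ X0, ∀ s1 s2 : List E, ∀ x1 x2 : X,
    IsRun δ x0 s1 x1 → x1 ∈ XS → IsRun δ x1 s2 x2 → (proj Eo s2).length ≤ K →
    ∃ x0' ∈ X0, ∃ s1' s2' : List E, ∃ x1' x2' : X,
      IsRun δ x0' s1' x1' ∧ IsNSRun δ XSᶜ x1' s2' x2' ∧
      proj Eo s1' = proj Eo s1 ∧ proj Eo s2' = proj Eo s2

/-- Strong K-step opacity, Definition 3.1b (matching run entirely non-secret). -/
def KSSOb (δ : X → E → Set X) (Eo : E → Bool) (X0 XS : Set X) (K : ℕ) : Prop :=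
  ∀ x0 ∈ X0, ∀ s1 s2 : List E, ∀ x1 x2 : X,
    IsRun δ x0 s1 x1 → x1 ∈ XS → IsRun δ x1 s2 x2 → (proj Eo s2).length ≤ K →
    ∃ x0' ∈ X0, ∃ s1' s2' : List E, ∃ x1' x2' : X,
      IsNSRun δ XSᶜ x0' s1' x1' ∧ IsNSRun δ XSᶜ x1' s2' x2' ∧
      proj Eo s1' = proj Eo s1 ∧ proj Eo s2' = proj Eo s2

/-- Standard current-state opacity. -/
def CSO (δ : X → E → Set X) (Eo : E → Bool) (X0 XS : Set X) : Prop :=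
  ∀ x0 ∈ X0, ∀ s : List E, (∃ z ∈ ext δ x0 s, z ∈ XS) →
    ∃ x0' ∈ X0, ∃ s' : List E, proj Eo s' = proj Eo s ∧ ∃ z ∈ ext δ x0' s', z ∈ XSᶜ

/-- Strong current-state opacity. -/
def SCSO (δ : X → E → Set X) (Eo : E → Bool) (X0 XS : Set X) : Prop :=
  ∀ x0 ∈ X0, ∀ s : List E, (∃ z ∈ ext δ x0 s, z ∈ XS) →
    ∃ x0' ∈ X0 \ XS, ∃ t : List E, ∃ x : X, IsNSRun δ XSᶜ x0' t x ∧ proj Eo t = proj Eo s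

/-- Strong initial-state opacity. -/
def SISO (δ : X → E → Set X) (Eo : E → Bool) (X0 XS : Set X) : Prop :=
  ∀ x0 ∈ X0 ∩ XS, ∀ s : List E, (ext δ x0 s).Nonempty →
    ∃ x0' ∈ X0 \ XS, ∃ t : List E, ∃ x : X, IsNSRun δ XSᶜ x0' t x ∧ proj Eo t = proj Eo s

/-- Strong infinite-step opacity. -/
def InfSSO (δ : X → E → Set X) (Eo : E → Bool) (X0 XS : Set X) : Prop :=
  ∀ x0 ∈ X0, ∀ s1 s2 : List E, (ext δ x0 (s1 ++ s2)).Nonempty →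
    (∃ z ∈ ext δ x0 s1, z ∈ XS) →
    ∃ x0' ∈ X0 \ XS, ∃ t : List E, ∃ x : X, IsNSRun δ XSᶜ x0' t x ∧
      proj Eo t = proj Eo (s1 ++ s2)

/-- Observer transition on one observable event (empty set = undefined). -/
def obsStep (δ : X → E → Set X) (Eo : E → Bool) (q : Set X) (σ : E) : Set X :=
  {x' | ∃ x ∈ q, ∃ w : List E, (∀ e ∈ w, Eo e = false) ∧ x' ∈ ext δ x (σ :: w)}

/-- Initial observer state: unobservable reach of the initial states. -/
def obsInit (δ : X → E → Set X) (Eo : E → Bool) (X0 : Set X) : Set X :=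
  {x' | ∃ x ∈ X0, ∃ w : List E, (∀ e ∈ w, Eo e = false) ∧ x' ∈ ext δ x w}

/-- Observer transition extended to observation strings. -/
def obsExt (δ : X → E → Set X) (Eo : E → Bool) : Set X → List E → Set X
  | q, [] => q
  | q, σ :: α => obsExt δ Eo (obsStep δ Eo q σ) α

/-- Synchronous step of `Cc(G, Obs(G))`. -/
def ccStep (δ : X → E → Set X) (Eo : E → Bool) (p p' : X × Set X) : Prop :=
  ∃ σ : E,
    (Eo σ = true ∧ p'.1 ∈ δ p.1 σ ∧ (obsStep δ Eo p.2 σ).Nonempty ∧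
      p'.2 = obsStep δ Eo p.2 σ) ∨
    (Eo σ = false ∧ p'.1 ∈ δ p.1 σ ∧ p'.2 = p.2)

/-- Reachability in `Cc(G, Obs(G))`. -/
def ccReach (δ : X → E → Set X) (Eo : E → Bool) (X0 : Set X) (p : X × Set X) : Prop :=
  ∃ x ∈ obsInit δ Eo X0, Relation.ReflTransGen (ccStep δ Eo) (x, obsInit δ Eo X0) p

/-- Deleting a set of transitions from an NFA. -/
def delTrans (δ : X → E → Set X) (Edel : Set (X × E × X)) : X → E → Set X :=
  fun x σ => {y ∈ δ x σ | (x, σ, y) ∉ Edel}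

/-- Transitions of the non-secret subautomaton (secret states deleted). -/
def δdss (δ : X → E → Set X) (XS : Set X) : X → E → Set X :=
  fun x σ => {y ∈ δ x σ | x ∉ XS ∧ y ∉ XS}

/-- One step of the concurrent composition `Cc(Ĝ, G̃_obs)`. -/
def cc2Step (δ δt : X → E → Set X) (Eo : E → Bool) (p : X × Set X) (σ : E) :
    Set (X × Set X) :=
  if Eo σ then {p' | p'.1 ∈ δ p.1 σ ∧ p'.2 = obsStep δt Eo p.2 σ}
  else {p' | p'.1 ∈ δ p.1 σ ∧ p'.2 = p.2}

/-- Extended transition function of `Cc(Ĝ, G̃_obs)`. -/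
def cc2Ext (δ δt : X → E → Set X) (Eo : E → Bool) : (X × Set X) → List E → Set (X × Set X)
  | p, [] => {p}
  | p, σ :: s => ⋃ p' ∈ cc2Step δ δt Eo p σ, cc2Ext δ δt Eo p' s

/-- Initial states of `Cc(Ĝ, G̃_obs)`. -/
def ccInit (δ : X → E → Set X) (Eo : E → Bool) (X0 XS : Set X) : Set (X × Set X) :=
  {p | ∃ α : List E, (∀ e ∈ α, Eo e = true) ∧
    p.1 ∈ XS ∩ obsExt δ Eo (obsInit δ Eo X0) α ∧
    p.2 = obsExt δ Eo (obsInit δ Eo X0) α ∩ XSᶜ}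

end SBO

open SBO

section Helpers

variable {X E : Type}

lemma mem_ext_cons {δ : X → E → Set X} {x z : X} {σ : E} {s : List E} :
    z ∈ ext δ x (σ :: s) ↔ ∃ y ∈ δ x σ, z ∈ ext δ y s := by
  simp [ext]

lemma mem_ext_append {δ : X → E → Set X} {s t : List E} :
    ∀ {x z : X}, z ∈ ext δ x (s ++ t) ↔ ∃ y ∈ ext δ x s, z ∈ ext δ y t := by
  induction s with
  | nil => intro x z; simp [ext]
  | cons σ s ih =>
      intro x z
      simp only [List.cons_append, mem_ext_cons]
      constructor
      · rintro ⟨y, hy, hz⟩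
        rcases ih.mp hz with ⟨w, hw, hzw⟩
        exact ⟨w, ⟨y, hy, hw⟩, hzw⟩
      · rintro ⟨w, ⟨y, hy, hyw⟩, hzw⟩
        exact ⟨y, hy, ih.mpr ⟨w, hyw, hzw⟩⟩

lemma obsExt_append {δ : X → E → Set X} {Eo : E → Bool} (α β : List E) :
    ∀ q : Set X, obsExt δ Eo q (α ++ β) = obsExt δ Eo (obsExt δ Eo q α) β := by
  induction α with
  | nil => intro q; rfl
  | cons σ α ih => intro q; simp only [List.cons_append, obsExt]; exact ih _

lemma filter_split {p : E → Bool} :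
    ∀ {s β : List E} {σ : E}, s.filter p = β ++ [σ] →
      ∃ s1 s2 : List E, s = s1 ++ σ :: s2 ∧ s1.filter p = β ∧ s2.filter p = [] := by
  intro s
  induction s with
  | nil => intro β σ h; simp at h
  | cons e s ih =>
      intro β σ h
      by_cases hp : p e
      · rw [List.filter_cons_of_pos hp] at h
        cases β with
        | nil =>
            obtain ⟨he, hs⟩ : e = σ ∧ s.filter p = [] := by
              simpa using h
            exact ⟨[], s, by simp [he], by simp, hs⟩
        | cons b β' =>
            obtain ⟨he, hs⟩ : e = b ∧ s.filter p = β' ++ [σ] := by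
              simpa using h
            obtain ⟨s1, s2, h1, h2, h3⟩ := ih hs
            subst he
            exact ⟨e :: s1, s2, by simp [h1],
              by simp [List.filter_cons_of_pos hp, h2], h3⟩
      · rw [List.filter_cons_of_neg hp] at h
        obtain ⟨s1, s2, h1, h2, h3⟩ := ih h
        exact ⟨e :: s1, s2, by simp [h1],
          by simp [List.filter_cons_of_neg hp, h2], h3⟩

lemma mem_obsInit_iff {δ : X → E → Set X} {Eo : E → Bool} {X0 : Set X} {x : X} :
    x ∈ obsInit δ Eo X0 ↔ ∃ x0 ∈ X0, ∃ s : List E, proj Eo s = [] ∧ x ∈ ext δ x0 s := by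
  constructor
  · rintro ⟨x0, hx0, w, hw, hx⟩
    refine ⟨x0, hx0, w, ?_, hx⟩
    simp only [proj, List.filter_eq_nil_iff]
    intro e he
    simp [hw e he]
  · rintro ⟨x0, hx0, s, hs, hx⟩
    refine ⟨x0, hx0, s, ?_, hx⟩
    intro e he
    have := (List.filter_eq_nil_iff.mp hs) e he
    simpa using this

lemma obsExt_char {δ : X → E → Set X} {Eo : E → Bool} {X0 : Set X} :
    ∀ (α : List E) (q : Set X) (β : List E),
      (∀ x : X, x ∈ q ↔ ∃ x0 ∈ X0, ∃ s : List E, proj Eo s = β ∧ x ∈ ext δ x0 s) →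
      (∀ e ∈ α, Eo e = true) →
      ∀ x : X, x ∈ obsExt δ Eo q α ↔
        ∃ x0 ∈ X0, ∃ s : List E, proj Eo s = β ++ α ∧ x ∈ ext δ x0 s := by
  intro α
  induction α with
  | nil => intro q β hq _ x; simpa [obsExt] using hq x
  | cons σ α ih =>
      intro q β hq hα x
      have hσ : Eo σ = true := hα σ (by simp)
      have hq' : ∀ y : X, y ∈ obsStep δ Eo q σ ↔
          ∃ x0 ∈ X0, ∃ s : List E, proj Eo s = β ++ [σ] ∧ y ∈ ext δ x0 s := by
        intro y
        constructor
        · rintro ⟨z, hz, w, hw, hy⟩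
          rcases (hq z).mp hz with ⟨x0, hx0, s, hs, hzs⟩
          refine ⟨x0, hx0, s ++ (σ :: w), ?_, mem_ext_append.mpr ⟨z, hzs, hy⟩⟩
          have hwnil : w.filter Eo = [] := by
            apply List.filter_eq_nil_iff.mpr
            intro e he; simp [hw e he]
          simp [proj, List.filter_append, List.filter_cons, hσ, hwnil, proj] at *
          simp [hs, hwnil]
        · rintro ⟨x0, hx0, s, hs, hy⟩
          obtain ⟨s1, s2, rfl, h2, h3⟩ := filter_split (p := Eo) hs
          rcases mem_ext_append.mp hy with ⟨z, hz1, hz2⟩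
          refine ⟨z, (hq z).mpr ⟨x0, hx0, s1, h2, hz1⟩, s2, ?_, hz2⟩
          intro e he
          have := (List.filter_eq_nil_iff.mp h3) e he
          simpa using this
      have := ih (obsStep δ Eo q σ) (β ++ [σ]) hq'
        (fun e he => hα e (by simp [he])) x
      simpa [obsExt, List.append_assoc] using this

lemma mem_obsExt_iff {δ : X → E → Set X} {Eo : E → Bool} {X0 : Set X}
    (α : List E) (hα : ∀ e ∈ α, Eo e = true) (x : X) :
    x ∈ obsExt δ Eo (obsInit δ Eo X0) α ↔
      ∃ x0 ∈ X0, ∃ s : List E, proj Eo s = α ∧ x ∈ ext δ x0 s := by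
  have := obsExt_char (δ := δ) (Eo := Eo) (X0 := X0) α (obsInit δ Eo X0) []
    (fun y => mem_obsInit_iff) hα x
  simpa using this

lemma proj_observable {Eo : E → Bool} (s : List E) : ∀ e ∈ proj Eo s, Eo e = true :=
  fun _ he => List.of_mem_filter he

lemma ccReach_of_ext {δ : X → E → Set X} {Eo : E → Bool} {X0 : Set X} :
    ∀ (s : List E) (x0 x : X), x0 ∈ X0 → x ∈ ext δ x0 s →
      ccReach δ Eo X0 (x, obsExt δ Eo (obsInit δ Eo X0) (proj Eo s)) := by
  intro s
  induction s using List.reverseRecOn with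
  | nil =>
      intro x0 x hx0 hx
      have hxx0 : x = x0 := by simpa [ext] using hx
      subst hxx0
      have hinit : x ∈ obsInit δ Eo X0 :=
        mem_obsInit_iff.mpr ⟨x, hx0, [], rfl, by simp [ext]⟩
      exact ⟨x, hinit, by simpa [proj, obsExt] using Relation.ReflTransGen.refl⟩
  | append_singleton s σ ih =>
      intro x0 x hx0 hx
      rcases mem_ext_append.mp hx with ⟨y, hy, hxy⟩
      have hxδ : x ∈ δ y σ := by
        rcases mem_ext_cons.mp hxy with ⟨z, hz, hzz⟩
        have : x = z := by simpa [ext] using hzz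
        simpa [this] using hz
      obtain ⟨w, hw, hreach⟩ := ih x0 y hx0 hy
      by_cases hσ : Eo σ = true
      · have hyq : y ∈ obsExt δ Eo (obsInit δ Eo X0) (proj Eo s) :=
          (mem_obsExt_iff (proj Eo s) (proj_observable s) y).mpr
            ⟨x0, hx0, s, rfl, hy⟩
        have hxstep : x ∈ obsStep δ Eo (obsExt δ Eo (obsInit δ Eo X0) (proj Eo s)) σ :=
          ⟨y, hyq, [], by simp, mem_ext_cons.mpr ⟨x, hxδ, by simp [ext]⟩⟩
        have hqeq : obsExt δ Eo (obsInit δ Eo X0) (proj Eo (s ++ [σ])) =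
            obsStep δ Eo (obsExt δ Eo (obsInit δ Eo X0) (proj Eo s)) σ := by
          have : proj Eo (s ++ [σ]) = proj Eo s ++ [σ] := by
            simp [proj, List.filter_append, List.filter_cons, hσ]
          rw [this, obsExt_append]
          rfl
        refine ⟨w, hw, hreach.tail ?_⟩
        exact ⟨σ, Or.inl ⟨hσ, hxδ, ⟨x, hxstep⟩, hqeq⟩⟩
      · have hσ' : Eo σ = false := by simpa using hσ
        have hproj : proj Eo (s ++ [σ]) = proj Eo s := by
          simp [proj, List.filter_append, List.filter_cons, hσ']
        rw [hproj]
        refine ⟨w, hw, hreach.tail ?_⟩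
        exact ⟨σ, Or.inr ⟨hσ', hxδ, rfl⟩⟩

end Helpers

/-- properties of the composition `Cc(G, Obs(G))`. -/
theorem ccGObs_correct {X E : Type} (δ : X → E → Set X) (Eo : E → Bool) (X0 : Set X) :
    (∀ α : List E, (∀ e ∈ α, Eo e = true) →
      ∀ x ∈ obsExt δ Eo (obsInit δ Eo X0) α,
        ccReach δ Eo X0 (x, obsExt δ Eo (obsInit δ Eo X0) α)) ∧
    (∀ x : X, ∀ q : Set X, ccReach δ Eo X0 (x, q) ↔
      ∃ x0 ∈ X0, ∃ s : List E, x ∈ ext δ x0 s ∧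
        obsExt δ Eo (obsInit δ Eo X0) (proj Eo s) = q) := by
  have main : ∀ x : X, ∀ q : Set X, ccReach δ Eo X0 (x, q) ↔
      ∃ x0 ∈ X0, ∃ s : List E, x ∈ ext δ x0 s ∧
        obsExt δ Eo (obsInit δ Eo X0) (proj Eo s) = q := by
    intro x q
    constructor
    · rintro ⟨y, hy, hreach⟩
      have key : ∀ p : X × Set X,
          Relation.ReflTransGen (ccStep δ Eo) (y, obsInit δ Eo X0) p →
          ∃ x0 ∈ X0, ∃ s : List E, p.1 ∈ ext δ x0 s ∧
            obsExt δ Eo (obsInit δ Eo X0) (proj Eo s) = p.2 := by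
        intro p hp
        induction hp with
        | refl =>
            rcases mem_obsInit_iff.mp hy with ⟨x0, hx0, s, hs, hys⟩
            exact ⟨x0, hx0, s, hys, by rw [hs]; rfl⟩
        | tail _ hstep ih =>
            rename_i b c _
            obtain ⟨x0, hx0, s, hbs, hq⟩ := ih
            obtain ⟨σ, hcase⟩ := hstep
            rcases hcase with ⟨hσ, hδ, _, hc2⟩ | ⟨hσ, hδ, hc2⟩
            · refine ⟨x0, hx0, s ++ [σ],
                mem_ext_append.mpr ⟨b.1, hbs, mem_ext_cons.mpr ⟨c.1, hδ, rfl⟩⟩, ?_⟩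
              have : proj Eo (s ++ [σ]) = proj Eo s ++ [σ] := by
                simp [proj, List.filter_append, List.filter_cons, hσ]
              rw [this, obsExt_append, hq, hc2]
              rfl
            · refine ⟨x0, hx0, s ++ [σ],
                mem_ext_append.mpr ⟨b.1, hbs, mem_ext_cons.mpr ⟨c.1, hδ, rfl⟩⟩, ?_⟩
              have : proj Eo (s ++ [σ]) = proj Eo s := by
                simp [proj, List.filter_append, List.filter_cons, hσ]
              rw [this, hq, hc2]
      exact key (x, q) hreach
    · rintro ⟨x0, hx0, s, hx, rfl⟩
      exact ccReach_of_ext s x0 x hx0 hx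
  refine ⟨?_, main⟩
  intro α hα x hx
  obtain ⟨x0, hx0, s, hs, hxs⟩ := (mem_obsExt_iff α hα x).mp hx
  exact (main x _).mpr ⟨x0, hx0, s, hxs, by rw [hs]⟩
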